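/- Let w ≥ 1 and define e_i for i ≥ 0 by e_0 = 1 and e_i = w/(w+i) + (1/(w+i))·∑_{j=0}^{i-1}(1 + e_j) for i ≥ 1. Then e_i = 1 + ∑_{j=1}^{i} 1/(w+j) for all i ≥ 0. -/

import Mathlib

open Finset Real

theorem anchorhash_expectation_recurrence (w : ℕ) (hw : 1 ≤ w) (e : ℕ → ℝ)
    (h0 : e 0 = 1)
    (hrec : ∀ i, 1 ≤ i →
      e i = (w : ℝ) / ((w : ℝ) + i)
        + (1 / ((w : ℝ) + i)) * ∑ j ∈ Finset.range i, (1 + e j)) :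
    ∀ i, e i = 1 + ∑ j ∈ Finset.Icc 1 i, 1 / ((w : ℝ) + j) := by
  have hpos : ∀ i : ℕ, (0 : ℝ) < (w : ℝ) + i := by
    intro i
    have : (1 : ℝ) ≤ (w : ℝ) := by exact_mod_cast hw
    have : (0 : ℝ) ≤ (i : ℝ) := Nat.cast_nonneg i
    nlinarith
  have hne : ∀ i : ℕ, ((w : ℝ) + i) ≠ 0 := fun i => ne_of_gt (hpos i)
  -- multiplied form of the recurrence
  have hmul : ∀ i, 1 ≤ i →
      ((w : ℝ) + i) * e i = (w : ℝ) + ∑ j ∈ Finset.range i, (1 + e j) := by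
    intro i hi
    have h := hrec i hi
    field_simp at h
    linarith [h]
  -- step: e (n+1) = e n + 1/(w+n+1) for n ≥ 1
  intro i
  induction i with
  | zero => simp [h0]
  | succ n ih =>
    rcases Nat.eq_zero_or_pos n with hn | hn
    · subst hn
      have h := hrec 1 le_rfl
      simp [h0] at h
      rw [h]
      rw [show Finset.Icc 1 1 = {1} from rfl]
      simp
      field_simp
      ring
    · have h1 := hmul n hn
      have h2 := hmul (n + 1) (Nat.le_add_left 1 n)
      have hsum : ∑ j ∈ Finset.range (n + 1), (1 + e j)
          = (∑ j ∈ Finset.range n, (1 + e j)) + (1 + e n) :=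
        Finset.sum_range_succ _ _
      have hcast : ((n + 1 : ℕ) : ℝ) = (n : ℝ) + 1 := by push_cast; ring
      rw [hcast, hsum] at h2
      -- (w + n + 1) * e (n+1) = (w + n) * e n + 1 + e n = (w + n + 1) * e n + 1
      have hstep : e (n + 1) = e n + 1 / ((w : ℝ) + n + 1) := by
        have hne' : ((w : ℝ) + n + 1) ≠ 0 := by
          have := hpos (n + 1)
          push_cast at this
          linarith
        field_simp
        nlinarith [h1, h2]
      rw [hstep, ih, Finset.sum_Icc_succ_top (by omega : 1 ≤ n + 1)]
      push_cast
      ring
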